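/- Cross-ratio of two intersecting circles (intersection points and centers): let z1, z3 ∈ ℂ with z1 ≠ z3 be the centers of two circles and let z0, z2 ∈ ℂ with z0 ≠ z2 be their two intersection points, i.e. |z0 − z1| = |z2 − z1| > 0 and |z0 − z3| = |z2 − z3| > 0. Then ((z0 − z1)(z2 − z3))/((z1 − z2)(z3 − z0)) = u / conj(u), where u := (z1 − z0) · conj(z3 − z0). In particular this cross-ratio has modulus 1 and equals exp(2iφ), where φ = arg u is the intersection angle of the two circles at z0. -/

import Mathlib

open Complex

lemma div_conj_eq_exp (w : ℂ) (hw : w ≠ 0) :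
    w / (starRingEnd ℂ) w = Complex.exp (2 * Complex.I * (Complex.arg w : ℂ)) := by
  have hr : ((‖w‖ : ℝ) : ℂ) ≠ 0 := by exact_mod_cast norm_ne_zero_iff.mpr hw
  conv_lhs => rw [← Complex.norm_mul_exp_arg_mul_I w]
  rw [map_mul, Complex.conj_ofReal, ← Complex.exp_conj, map_mul, Complex.conj_ofReal,
    Complex.conj_I, mul_div_mul_left _ _ hr, ← Complex.exp_sub]
  congr 1
  ring

theorem cross_ratio_of_two_intersecting_circles
    (z0 z1 z2 z3 : ℂ)
    (hc : z1 ≠ z3) (hi : z0 ≠ z2)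
    (hr1 : ‖z0 - z1‖ = ‖z2 - z1‖)
    (hr1pos : 0 < ‖z0 - z1‖)
    (hr3 : ‖z0 - z3‖ = ‖z2 - z3‖)
    (hr3pos : 0 < ‖z0 - z3‖) :
    (z0 - z1) * (z2 - z3) / ((z1 - z2) * (z3 - z0)) =
        (z1 - z0) * (starRingEnd ℂ) (z3 - z0) /
          (starRingEnd ℂ) ((z1 - z0) * (starRingEnd ℂ) (z3 - z0)) ∧
      ‖(z0 - z1) * (z2 - z3) / ((z1 - z2) * (z3 - z0))‖ = 1 ∧
      (z0 - z1) * (z2 - z3) / ((z1 - z2) * (z3 - z0)) =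
        Complex.exp (2 * Complex.I *
          (Complex.arg ((z1 - z0) * (starRingEnd ℂ) (z3 - z0)) : ℂ)) := by
  have ha : z0 - z1 ≠ 0 := by
    intro h; rw [h] at hr1pos; simp at hr1pos
  have hcne : z0 - z3 ≠ 0 := by
    intro h; rw [h] at hr3pos; simp at hr3pos
  have hb : z1 - z2 ≠ 0 := by
    intro h
    have : z2 - z1 = 0 := by linear_combination -h
    rw [this] at hr1; simp at hr1
    exact ha hr1
  have hd : z3 - z0 ≠ 0 := fun h => hcne (by linear_combination -h)
  have hs : z0 - z2 ≠ 0 := sub_ne_zero.mpr hi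
  have hu : (z1 - z0) * (starRingEnd ℂ) (z3 - z0) ≠ 0 :=
    mul_ne_zero (fun h => ha (by linear_combination -h)) ((map_ne_zero _).mpr hd)
  have huc : (starRingEnd ℂ) ((z1 - z0) * (starRingEnd ℂ) (z3 - z0)) ≠ 0 :=
    (map_ne_zero _).mpr hu
  have e1 : (z0 - z1) * (starRingEnd ℂ) (z0 - z1)
      = (z2 - z1) * (starRingEnd ℂ) (z2 - z1) := by
    rw [Complex.mul_conj, Complex.mul_conj]
    norm_cast
    rw [← Complex.sq_norm, ← Complex.sq_norm, hr1]
  have e3 : (z0 - z3) * (starRingEnd ℂ) (z0 - z3)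
      = (z2 - z3) * (starRingEnd ℂ) (z2 - z3) := by
    rw [Complex.mul_conj, Complex.mul_conj]
    norm_cast
    rw [← Complex.sq_norm, ← Complex.sq_norm, hr3]
  simp only [map_sub] at e1 e3
  have hsc' : (starRingEnd ℂ) z0 - (starRingEnd ℂ) z2 ≠ 0 :=
    sub_ne_zero.mpr fun h => hi ((starRingEnd ℂ).injective h)
  -- the key algebraic identity
  have key : (z2 - z3) * ((starRingEnd ℂ) z0 - (starRingEnd ℂ) z1)
      = (z2 - z1) * ((starRingEnd ℂ) z0 - (starRingEnd ℂ) z3) := by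
    apply mul_left_cancel₀ hsc'
    linear_combination ((starRingEnd ℂ) z0 - (starRingEnd ℂ) z1) * e3
      - ((starRingEnd ℂ) z0 - (starRingEnd ℂ) z3) * e1
  have part1 : (z0 - z1) * (z2 - z3) / ((z1 - z2) * (z3 - z0))
      = (z1 - z0) * (starRingEnd ℂ) (z3 - z0) /
          (starRingEnd ℂ) ((z1 - z0) * (starRingEnd ℂ) (z3 - z0)) := by
    rw [div_eq_div_iff (mul_ne_zero hb hd) huc]
    simp only [map_sub, map_mul, Complex.conj_conj]
    linear_combination ((z0 - z1) * (z0 - z3)) * key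
  refine ⟨part1, ?_, ?_⟩
  · rw [part1, norm_div, Complex.norm_conj]
    exact div_self (norm_ne_zero_iff.mpr hu)
  · rw [part1]
    exact div_conj_eq_exp _ hu
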